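/- Let 1 < p < ∞ and let ω : (0,∞) → ℝ be a bounded continuous slowly oscillating function. Then the function 𝔠(t,·) : x ↦ e^{iω(t)(x+i/p)} / sinh(π(x+i/p)) satisfies: there is a constant L < ∞ with ‖𝔠(t,·) − 𝔠(τ,·)‖_{L^∞(ℝ)} + ∫_ℝ |∂_x 𝔠(t,x) − ∂_x 𝔠(τ,x)| dx ≤ L |ω(t) − ω(τ)| for all t, τ ∈ (0,∞); consequently t ↦ 𝔠(t,·) is a bounded continuous map from (0,∞) into the Banach space V(ℝ) of absolutely continuous functions of finite total variation with norm ‖f‖_V = ‖f‖_∞ + ∫|f'|. -/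

import Mathlib

open Filter Set Complex MeasureTheory

noncomputable def osc {E : Type*} [NormedAddCommGroup E] (f : ℝ → E) (a b : ℝ) : ℝ :=
  sSup {d | ∃ t ∈ Set.Icc a b, ∃ τ ∈ Set.Icc a b, d = ‖f t - f τ‖}

def SO {E : Type*} [NormedAddCommGroup E] (f : ℝ → E) : Prop :=
  ContinuousOn f (Set.Ioi 0) ∧ (∃ C, ∀ t ∈ Set.Ioi (0:ℝ), ‖f t‖ ≤ C) ∧
  ∀ l ∈ Set.Ioo (0:ℝ) 1,
    Tendsto (fun r => osc f (l * r) r) (nhdsWithin 0 (Set.Ioi 0)) (nhds 0) ∧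
    Tendsto (fun r => osc f (l * r) r) atTop (nhds 0)

/-- `𝔠(t,x) = e^{iω(t)(x+i/p)} / sinh(π(x+i/p))`. -/
noncomputable def cFun (p : ℝ) (ω : ℝ → ℝ) (t x : ℝ) : ℂ :=
  Complex.exp (Complex.I * (ω t) * (x + Complex.I / p)) /
    Complex.sinh ((Real.pi : ℂ) * (x + Complex.I / p))

/-- The `V(ℝ)`-norm distance between the symbols `𝔠(t,·)` and `𝔠(τ,·)`. -/
noncomputable def Vdist (p : ℝ) (ω : ℝ → ℝ) (t τ : ℝ) : ℝ :=
  (⨆ x : ℝ, ‖cFun p ω t x - cFun p ω τ x‖) +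
    ∫ x : ℝ, ‖deriv (cFun p ω t) x - deriv (cFun p ω τ) x‖

namespace CAux

noncomputable def zc (p : ℝ) (x : ℝ) : ℂ := (x : ℂ) + Complex.I / p
noncomputable def Sf (p : ℝ) (x : ℝ) : ℂ := Complex.sinh ((Real.pi : ℂ) * zc p x)
noncomputable def Chf (p : ℝ) (x : ℝ) : ℂ := Complex.cosh ((Real.pi : ℂ) * zc p x)
noncomputable def Ef (p : ℝ) (a : ℝ) (x : ℝ) : ℂ := Complex.exp (Complex.I * a * zc p x)
noncomputable def df (p : ℝ) (a : ℝ) (x : ℝ) : ℂ :=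
  ((Complex.I * a * Ef p a x) * Sf p x - Ef p a x * ((Real.pi : ℂ) * Chf p x)) / (Sf p x) ^ 2

variable {p : ℝ}

lemma pz (p : ℝ) (x : ℝ) :
    (Real.pi : ℂ) * zc p x = ((Real.pi * x : ℝ) : ℂ) + ((Real.pi / p : ℝ) : ℂ) * Complex.I := by
  simp only [zc]; push_cast; ring

lemma Sf_decomp (p : ℝ) (x : ℝ) :
    Sf p x = ((Real.sinh (Real.pi * x) * Real.cos (Real.pi / p) : ℝ) : ℂ) +
      ((Real.cosh (Real.pi * x) * Real.sin (Real.pi / p) : ℝ) : ℂ) * Complex.I := by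
  rw [Sf, pz, Complex.sinh_add, Complex.sinh_mul_I, Complex.cosh_mul_I,
    ← Complex.ofReal_sinh, ← Complex.ofReal_cosh, ← Complex.ofReal_sin, ← Complex.ofReal_cos,
    Complex.ofReal_mul, Complex.ofReal_mul]
  ring

lemma Chf_decomp (p : ℝ) (x : ℝ) :
    Chf p x = ((Real.cosh (Real.pi * x) * Real.cos (Real.pi / p) : ℝ) : ℂ) +
      ((Real.sinh (Real.pi * x) * Real.sin (Real.pi / p) : ℝ) : ℂ) * Complex.I := by
  rw [Chf, pz, Complex.cosh_add, Complex.sinh_mul_I, Complex.cosh_mul_I,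
    ← Complex.ofReal_sinh, ← Complex.ofReal_cosh, ← Complex.ofReal_sin, ← Complex.ofReal_cos,
    Complex.ofReal_mul, Complex.ofReal_mul]
  ring

lemma absSf_sq (p : ℝ) (x : ℝ) :
    (‖Sf p x‖) ^ 2 = Real.sinh (Real.pi * x) ^ 2 + Real.sin (Real.pi / p) ^ 2 := by
  rw [Sf_decomp, Complex.sq_norm, Complex.normSq_add_mul_I]
  have h1 := Real.sin_sq_add_cos_sq (Real.pi / p)
  have h2 := Real.cosh_sq (Real.pi * x)
  nlinarith [Real.sinh_sq (Real.pi * x)]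

lemma absChf_sq_le (p : ℝ) (x : ℝ) :
    (‖Chf p x‖) ^ 2 ≤ Real.cosh (Real.pi * x) ^ 2 := by
  rw [Chf_decomp, Complex.sq_norm, Complex.normSq_add_mul_I]
  have h1 := Real.sin_sq_add_cos_sq (Real.pi / p)
  have h2 := Real.cosh_sq (Real.pi * x)
  nlinarith [sq_nonneg (Real.sin (Real.pi / p)), sq_nonneg (Real.sinh (Real.pi * x))]

end CAux

namespace CAux2
open CAux

lemma sq_le_le {a b : ℝ} (ha : 0 ≤ a) (hb : 0 ≤ b) (h : a ^ 2 ≤ b ^ 2) : a ≤ b := by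
  nlinarith [sq_nonneg (a - b), sq_nonneg (a + b)]

variable {p : ℝ}

lemma m_pos (hp : 1 < p) : 0 < Real.sin (Real.pi / p) := by
  have hp0 : 0 < p := lt_trans one_pos hp
  apply Real.sin_pos_of_pos_of_lt_pi
  · positivity
  · rw [div_lt_iff₀ hp0]
    nlinarith [Real.pi_pos]

lemma m_le_one : Real.sin (Real.pi / p) ≤ 1 := Real.sin_le_one _

lemma m_le_absSf (p : ℝ) (x : ℝ) : Real.sin (Real.pi / p) ≤ ‖Sf p x‖ := by
  rcases le_or_gt (Real.sin (Real.pi / p)) 0 with h | h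
  · exact h.trans (norm_nonneg _)
  · apply sq_le_le h.le (norm_nonneg _)
    rw [absSf_sq]
    nlinarith [sq_nonneg (Real.sinh (Real.pi * x))]

lemma absSf_pos (hp : 1 < p) (x : ℝ) : 0 < ‖Sf p x‖ :=
  lt_of_lt_of_le (m_pos hp) (m_le_absSf p x)

lemma Sf_ne (hp : 1 < p) (x : ℝ) : Sf p x ≠ 0 := by
  intro h
  have := absSf_pos hp x
  rw [h] at this
  simp at this

lemma sinh_le_absSf (p : ℝ) (x : ℝ) : |Real.sinh (Real.pi * x)| ≤ ‖Sf p x‖ := by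
  apply sq_le_le (abs_nonneg _) (norm_nonneg _)
  rw [_root_.sq_abs (Real.sinh (Real.pi * x)), absSf_sq]
  nlinarith [sq_nonneg (Real.sin (Real.pi / p))]

lemma cosh_le_absSf (hp : 1 < p) (x : ℝ) :
    Real.sin (Real.pi / p) * Real.cosh (Real.pi * x) ≤ ‖Sf p x‖ := by
  have hm := m_pos hp
  have hm1 : Real.sin (Real.pi / p) ≤ 1 := m_le_one
  apply sq_le_le (by positivity) (norm_nonneg _)
  rw [absSf_sq, mul_pow]
  have h2 := Real.cosh_sq (Real.pi * x)
  have hm2 : Real.sin (Real.pi / p) ^ 2 ≤ 1 := by nlinarith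
  nlinarith [mul_nonneg (sub_nonneg.mpr hm2) (sq_nonneg (Real.sinh (Real.pi * x)))]

lemma absChf_le (hp : 1 < p) (x : ℝ) :
    ‖Chf p x‖ ≤ ‖Sf p x‖ / Real.sin (Real.pi / p) := by
  have hm := m_pos hp
  rw [le_div_iff₀ hm]
  calc ‖Chf p x‖ * Real.sin (Real.pi / p)
      ≤ Real.cosh (Real.pi * x) * Real.sin (Real.pi / p) := by
        apply mul_le_mul_of_nonneg_right _ hm.le
        apply sq_le_le (norm_nonneg _) (Real.cosh_pos (x := Real.pi * x)).le (absChf_sq_le p x)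
    _ ≤ ‖Sf p x‖ := by rw [mul_comm]; exact cosh_le_absSf hp x

lemma absEf (hp : 1 < p) (a x : ℝ) : ‖Ef p a x‖ = Real.exp (-(a / p)) := by
  have h : Complex.I * (a : ℂ) * zc p x
      = ((-(a / p) : ℝ) : ℂ) + ((a * x : ℝ) : ℂ) * Complex.I := by
    simp only [zc]; push_cast [Complex.I_sq]; ring_nf; rw [Complex.I_sq]; ring
  rw [Ef, h, Complex.norm_exp]
  simp

lemma absEf_le {C : ℝ} (hp : 1 < p) {a : ℝ} (ha : |a| ≤ C) (x : ℝ) :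
    ‖Ef p a x‖ ≤ Real.exp (C / p) := by
  have hp0 : 0 < p := lt_trans one_pos hp
  rw [absEf hp]
  apply Real.exp_le_exp.mpr
  rw [← neg_div]
  exact (div_le_div_iff_of_pos_right hp0).mpr ((neg_le_abs a).trans ha)

end CAux2

namespace CAux3
open CAux CAux2

variable {p : ℝ}

lemma hasDerivAt_zc (p : ℝ) (x : ℝ) : HasDerivAt (fun y : ℝ => zc p y) 1 x := by
  simpa [zc] using (Complex.ofRealCLM.hasDerivAt (x := x)).add_const (Complex.I / p)

lemma hasDerivAt_Ef (p a : ℝ) (x : ℝ) :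
    HasDerivAt (fun y => Ef p a y) (Complex.I * a * Ef p a x) x := by
  have h := (((hasDerivAt_zc p x).const_mul (Complex.I * (a : ℂ)))).cexp
  simpa [Ef, mul_comm, mul_assoc, mul_left_comm] using h

lemma hasDerivAt_Sf (p : ℝ) (x : ℝ) :
    HasDerivAt (fun y => Sf p y) ((Real.pi : ℂ) * Chf p x) x := by
  have hin : HasDerivAt (fun y : ℝ => (Real.pi : ℂ) * zc p y) ((Real.pi : ℂ) * 1) x :=
    (hasDerivAt_zc p x).const_mul _
  have h := (Complex.hasDerivAt_sinh ((Real.pi : ℂ) * zc p x)).comp x hin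
  simpa [Sf, Chf, Function.comp_def, mul_comm, mul_assoc, mul_left_comm] using h

lemma hasDerivAt_c (hp : 1 < p) (a : ℝ) (x : ℝ) :
    HasDerivAt (fun y => Ef p a y / Sf p y) (df p a x) x :=
  (hasDerivAt_Ef p a x).div (hasDerivAt_Sf p x) (Sf_ne hp x)

lemma Ef_sub_le {C : ℝ} (hp : 1 < p) {a b : ℝ} (ha : |a| ≤ C) (hb : |b| ≤ C) (x : ℝ) :
    ‖Ef p a x - Ef p b x‖
      ≤ Real.exp (C / p) * (|x| + 1) * |a - b| := by
  have hp0 : 0 < p := lt_trans one_pos hp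
  have habsz : ‖zc p x‖ ≤ |x| + 1 := by
    refine (norm_add_le _ _).trans ?_
    have h1 : ‖(x : ℂ)‖ = |x| := by rw [Complex.norm_real, Real.norm_eq_abs]
    have h2 : ‖Complex.I / (p : ℂ)‖ = 1 / p := by
      rw [norm_div, Complex.norm_I, Complex.norm_real, Real.norm_eq_abs, abs_of_pos hp0]
    rw [h1, h2]
    have : 1 / p ≤ 1 := by rw [div_le_one hp0]; linarith
    linarith
  -- MVT on uIcc b a for s ↦ Ef p s x
  have key : ∀ s ∈ Set.uIcc b a,
      HasDerivWithinAt (fun s : ℝ => Ef p s x) (Ef p s x * (Complex.I * zc p x))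
        (Set.uIcc b a) s := by
    intro s _
    have h0 : HasDerivAt (fun s : ℝ => Complex.I * (s : ℂ) * zc p x) (Complex.I * zc p x) s := by
      simpa using ((Complex.ofRealCLM.hasDerivAt (x := s)).const_mul Complex.I).mul_const (zc p x)
    exact (h0.cexp).hasDerivWithinAt
  have bound : ∀ s ∈ Set.uIcc b a,
      ‖Ef p s x * (Complex.I * zc p x)‖ ≤ Real.exp (C / p) * (|x| + 1) := by
    intro s hs
    have hsC : |s| ≤ C := by
      rcases Set.mem_uIcc.mp hs with ⟨h1, h2⟩ | ⟨h1, h2⟩ <;>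
        rw [abs_le] <;> constructor <;>
          [skip; skip; skip; skip] <;>
        · first
          | linarith [abs_le.mp ha, abs_le.mp hb, (abs_le.mp ha).1, (abs_le.mp hb).1,
              (abs_le.mp ha).2, (abs_le.mp hb).2]
    have h1 : ‖Ef p s x * (Complex.I * zc p x)‖
        = ‖Ef p s x‖ * ‖zc p x‖ := by
      rw [norm_mul, norm_mul, Complex.norm_I, one_mul]
    rw [h1]
    exact mul_le_mul (absEf_le hp hsC x) habsz (norm_nonneg _) (Real.exp_pos _).le
  have := Convex.norm_image_sub_le_of_norm_hasDerivWithin_le key bound (convex_uIcc b a)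
    (Set.left_mem_uIcc) (Set.right_mem_uIcc)
  simpa [Real.norm_eq_abs] using this

end CAux3

namespace CAux4
open CAux CAux2 CAux3

variable {p : ℝ}

/-- The master decay constant. -/
noncomputable def Kd (p : ℝ) : ℝ := 2 * Real.exp 1 / Real.sin (Real.pi / p) + 4

lemma Kd_pos (hp : 1 < p) : 0 < Kd p := by
  have hm := m_pos hp
  have := Real.exp_pos 1
  have : 0 < 2 * Real.exp 1 / Real.sin (Real.pi / p) := by positivity
  simp only [Kd]; linarith

lemma decay (hp : 1 < p) (x : ℝ) :
    (|x| + 1) / ‖Sf p x‖ ≤ Kd p * Real.exp (-|x|) := by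
  have hm := m_pos hp
  have hA := absSf_pos hp x
  have hexp : (0:ℝ) ≤ Real.exp (-|x|) := (Real.exp_pos _).le
  rcases le_or_gt |x| 1 with h1 | h1
  · have step1 : (|x| + 1) / ‖Sf p x‖ ≤ 2 / Real.sin (Real.pi / p) :=
      div_le_div₀ (by norm_num) (by linarith) hm (m_le_absSf p x)
    have h2 : (1:ℝ) ≤ Real.exp (1 - |x|) := Real.one_le_exp (by linarith)
    calc (|x| + 1) / ‖Sf p x‖ ≤ 2 / Real.sin (Real.pi / p) := step1
      _ ≤ 2 / Real.sin (Real.pi / p) * Real.exp (1 - |x|) :=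
          le_mul_of_one_le_right (by positivity) h2
      _ = 2 * Real.exp 1 / Real.sin (Real.pi / p) * Real.exp (-|x|) := by
          rw [show (1 - |x|) = 1 + -|x| by ring, Real.exp_add]; ring
      _ ≤ Kd p * Real.exp (-|x|) := by
          apply mul_le_mul_of_nonneg_right _ hexp
          simp only [Kd]; linarith
  · have hpi3 : (3:ℝ) ≤ Real.pi := Real.pi_gt_three.le
    have hE4 : (4:ℝ) ≤ Real.exp (Real.pi * |x|) := by
      have h := Real.add_one_le_exp (Real.pi * |x|)
      nlinarith
    have hEneg : Real.exp (-(Real.pi * |x|)) ≤ 1 := by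
      rw [Real.exp_le_one_iff]
      nlinarith
    have hsinh : Real.exp (Real.pi * |x|) / 4 ≤ ‖Sf p x‖ := by
      have h0 : |Real.sinh (Real.pi * x)| = Real.sinh (Real.pi * |x|) := by
        rw [Real.abs_sinh, abs_mul, abs_of_pos Real.pi_pos]
      have h2 : Real.sinh (Real.pi * |x|)
          = (Real.exp (Real.pi * |x|) - Real.exp (-(Real.pi * |x|))) / 2 := Real.sinh_eq _
      have := sinh_le_absSf p x
      rw [h0, h2] at this
      linarith
    have hnum : |x| + 1 ≤ Real.exp |x| := by
      have := Real.add_one_le_exp |x|; linarith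
    calc (|x| + 1) / ‖Sf p x‖
        ≤ Real.exp |x| / (Real.exp (Real.pi * |x|) / 4) :=
          div_le_div₀ (Real.exp_pos _).le hnum (by positivity) hsinh
      _ = 4 * Real.exp (|x| - Real.pi * |x|) := by
          rw [Real.exp_sub]; field_simp
      _ ≤ 4 * Real.exp (-|x|) := by
          apply mul_le_mul_of_nonneg_left _ (by norm_num)
          apply Real.exp_le_exp.mpr
          nlinarith
      _ ≤ Kd p * Real.exp (-|x|) := by
          apply mul_le_mul_of_nonneg_right _ hexp
          have : 0 < 2 * Real.exp 1 / Real.sin (Real.pi / p) := by positivity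
          simp only [Kd]; linarith

lemma one_div_absSf_le (hp : 1 < p) (x : ℝ) :
    1 / ‖Sf p x‖ ≤ Kd p * Real.exp (-|x|) := by
  refine le_trans ?_ (decay hp x)
  gcongr
  linarith [abs_nonneg x]

lemma integrable_decay : Integrable (fun x : ℝ => Real.exp (-|x|)) := by
  have h1 : IntegrableOn (fun x : ℝ => Real.exp (-|x|)) (Ici 0) := by
    rw [integrableOn_Ici_iff_integrableOn_Ioi]
    refine (exp_neg_integrableOn_Ioi 0 one_pos).congr_fun ?_ measurableSet_Ioi
    intro y hy
    simp [abs_of_pos (show (0:ℝ) < y from hy)]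
  have h2 : IntegrableOn (fun x : ℝ => Real.exp (-|x|)) (Iio 0) := by
    rw [← (Measure.measurePreserving_neg (volume : Measure ℝ)).integrableOn_comp_preimage
        (Homeomorph.neg ℝ).measurableEmbedding]
    simp only [Function.comp_def, abs_neg, neg_preimage, neg_Iio, neg_zero]
    exact h1.mono_set Ioi_subset_Ici_self
  rw [← integrableOn_univ, ← Iio_union_Ici (a := (0:ℝ)), integrableOn_union]
  exact ⟨h2, h1⟩

end CAux4

namespace CAux5
open CAux CAux2 CAux3 CAux4

variable {p C : ℝ}

lemma abs_sub_le' (u v : ℂ) : ‖u - v‖ ≤ ‖u‖ + ‖v‖ := by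
  simpa [sub_eq_add_neg] using norm_add_le u (-v)

/-- Pointwise bound for the difference of the symbols. -/
lemma P1 (hp : 1 < p) {a b : ℝ} (ha : |a| ≤ C) (hb : |b| ≤ C) (x : ℝ) :
    ‖Ef p a x / Sf p x - Ef p b x / Sf p x‖
      ≤ Real.exp (C / p) * Kd p * Real.exp (-|x|) * |a - b| := by
  have hA := absSf_pos hp x
  rw [div_sub_div_same, norm_div]
  calc ‖Ef p a x - Ef p b x‖ / ‖Sf p x‖
      ≤ (Real.exp (C / p) * (|x| + 1) * |a - b|) / ‖Sf p x‖ := by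
        gcongr
        exact Ef_sub_le hp ha hb x
    _ = (Real.exp (C / p) * |a - b|) * ((|x| + 1) / ‖Sf p x‖) := by ring
    _ ≤ (Real.exp (C / p) * |a - b|) * (Kd p * Real.exp (-|x|)) :=
        mul_le_mul_of_nonneg_left (decay hp x) (by positivity)
    _ = Real.exp (C / p) * Kd p * Real.exp (-|x|) * |a - b| := by ring

/-- Pointwise bound for a single symbol. -/
lemma P0 (hp : 1 < p) {a : ℝ} (ha : |a| ≤ C) (x : ℝ) :
    ‖Ef p a x / Sf p x‖ ≤ Real.exp (C / p) * (Kd p * Real.exp (-|x|)) := by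
  have hA := absSf_pos hp x
  rw [norm_div]
  calc ‖Ef p a x‖ / ‖Sf p x‖
      ≤ Real.exp (C / p) / ‖Sf p x‖ := by gcongr; exact absEf_le hp ha x
    _ = Real.exp (C / p) * (1 / ‖Sf p x‖) := by ring
    _ ≤ Real.exp (C / p) * (Kd p * Real.exp (-|x|)) :=
        mul_le_mul_of_nonneg_left (one_div_absSf_le hp x) (by positivity)

/-- Pointwise bound for the derivative of a single symbol. -/
lemma P0' (hp : 1 < p) {a : ℝ} (ha : |a| ≤ C) (x : ℝ) :
    ‖df p a x‖
      ≤ (C + Real.pi / Real.sin (Real.pi / p)) * Real.exp (C / p)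
          * (Kd p * Real.exp (-|x|)) := by
  have hA := absSf_pos hp x
  have hm := m_pos hp
  have hC : 0 ≤ C := le_trans (abs_nonneg a) ha
  have hE := absEf_le hp ha x
  have hCh := absChf_le hp x
  set A := ‖Sf p x‖ with hAdef
  have hnum : ‖(Complex.I * a * Ef p a x) * Sf p x
        - Ef p a x * ((Real.pi : ℂ) * Chf p x)‖
      ≤ C * Real.exp (C / p) * A + Real.exp (C / p) * (Real.pi * (A / Real.sin (Real.pi / p))) := by
    refine (abs_sub_le' _ _).trans ?_
    have h1 : ‖(Complex.I * a * Ef p a x) * Sf p x‖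
        = |a| * ‖Ef p a x‖ * A := by
      simp [norm_mul, Complex.norm_I, Complex.norm_real, mul_assoc, hAdef]
    have h2 : ‖Ef p a x * ((Real.pi : ℂ) * Chf p x)‖
        = ‖Ef p a x‖ * (Real.pi * ‖Chf p x‖) := by
      simp [norm_mul, Complex.norm_real, abs_of_pos Real.pi_pos]
    rw [h1, h2]
    have t1 : |a| * ‖Ef p a x‖ * A ≤ C * Real.exp (C / p) * A := by
      gcongr
    have t2 : ‖Ef p a x‖ * (Real.pi * ‖Chf p x‖)
        ≤ Real.exp (C / p) * (Real.pi * (A / Real.sin (Real.pi / p))) := by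
      gcongr
    linarith
  rw [df, norm_div, norm_pow]
  calc ‖(Complex.I * a * Ef p a x) * Sf p x
          - Ef p a x * ((Real.pi : ℂ) * Chf p x)‖ / A ^ 2
      ≤ (C * Real.exp (C / p) * A
          + Real.exp (C / p) * (Real.pi * (A / Real.sin (Real.pi / p)))) / A ^ 2 := by
        gcongr
    _ = (C + Real.pi / Real.sin (Real.pi / p)) * Real.exp (C / p) * (1 / A) := by
        field_simp
    _ ≤ (C + Real.pi / Real.sin (Real.pi / p)) * Real.exp (C / p)
          * (Kd p * Real.exp (-|x|)) :=
        mul_le_mul_of_nonneg_left (one_div_absSf_le hp x) (by positivity)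

/-- Pointwise bound for the difference of the derivatives. -/
lemma P2 (hp : 1 < p) {a b : ℝ} (ha : |a| ≤ C) (hb : |b| ≤ C) (x : ℝ) :
    ‖df p a x - df p b x‖
      ≤ (C + 1 + Real.pi / Real.sin (Real.pi / p)) * Real.exp (C / p) * Kd p
          * Real.exp (-|x|) * |a - b| := by
  have hA := absSf_pos hp x
  have hm := m_pos hp
  have hC : 0 ≤ C := le_trans (abs_nonneg a) ha
  have hSne := Sf_ne hp x
  set A := ‖Sf p x‖ with hAdef
  set W := Real.exp (C / p) * (|x| + 1) * |a - b| with hWdef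
  have hW : ‖Ef p a x - Ef p b x‖ ≤ W := Ef_sub_le hp ha hb x
  have hW0 : 0 ≤ W := by positivity
  have hid : df p a x - df p b x
      = (Complex.I * a * (Ef p a x - Ef p b x) + Complex.I * ((a : ℂ) - b) * Ef p b x) / Sf p x
        - ((Real.pi : ℂ) * Chf p x * (Ef p a x - Ef p b x)) / (Sf p x) ^ 2 := by
    rw [df, df]
    field_simp
    ring
  rw [hid]
  have term1 : ‖(Complex.I * a * (Ef p a x - Ef p b x)
        + Complex.I * ((a : ℂ) - b) * Ef p b x) / Sf p x‖
      ≤ (C + 1) * W / A := by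
    rw [norm_div]
    gcongr ?_ / A
    refine (norm_add_le _ _).trans ?_
    have h1 : ‖Complex.I * a * (Ef p a x - Ef p b x)‖
        = |a| * ‖Ef p a x - Ef p b x‖ := by
      simp [norm_mul, Complex.norm_I, Complex.norm_real]
    have h2 : ‖Complex.I * ((a : ℂ) - b) * Ef p b x‖
        = |a - b| * ‖Ef p b x‖ := by
      have hcast : ((a : ℂ) - b) = ((a - b : ℝ) : ℂ) := by push_cast; ring
      rw [hcast, norm_mul, norm_mul, Complex.norm_I, Complex.norm_real, Real.norm_eq_abs, one_mul]
    rw [h1, h2]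
    have t1 : |a| * ‖Ef p a x - Ef p b x‖ ≤ C * W :=
      mul_le_mul ha hW (norm_nonneg _) hC
    have t2 : |a - b| * ‖Ef p b x‖ ≤ W := by
      rw [hWdef]
      calc |a - b| * ‖Ef p b x‖ ≤ |a - b| * Real.exp (C / p) :=
            mul_le_mul_of_nonneg_left (absEf_le hp hb x) (abs_nonneg _)
        _ ≤ Real.exp (C / p) * (|x| + 1) * |a - b| := by
            nlinarith [abs_nonneg x, abs_nonneg (a - b), Real.exp_pos (C / p)]
    linarith
  have term2 : ‖((Real.pi : ℂ) * Chf p x * (Ef p a x - Ef p b x)) / (Sf p x) ^ 2‖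
      ≤ (Real.pi / Real.sin (Real.pi / p)) * W / A := by
    rw [norm_div, norm_pow]
    have hnum : ‖(Real.pi : ℂ) * Chf p x * (Ef p a x - Ef p b x)‖
        ≤ Real.pi * (A / Real.sin (Real.pi / p)) * W := by
      have h1 : ‖(Real.pi : ℂ) * Chf p x * (Ef p a x - Ef p b x)‖
          = Real.pi * ‖Chf p x‖ * ‖Ef p a x - Ef p b x‖ := by
        simp [norm_mul, Complex.norm_real, abs_of_pos Real.pi_pos]
      rw [h1]
      gcongr
      exact absChf_le hp x
    calc ‖(Real.pi : ℂ) * Chf p x * (Ef p a x - Ef p b x)‖ / A ^ 2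
        ≤ (Real.pi * (A / Real.sin (Real.pi / p)) * W) / A ^ 2 := by gcongr
      _ = (Real.pi / Real.sin (Real.pi / p)) * W / A := by
          field_simp
  calc ‖_‖ ≤ (C + 1) * W / A + (Real.pi / Real.sin (Real.pi / p)) * W / A :=
        le_trans (abs_sub_le' _ _) (add_le_add term1 term2)
    _ = (C + 1 + Real.pi / Real.sin (Real.pi / p)) * (Real.exp (C / p) * |a - b|)
          * ((|x| + 1) / A) := by rw [hWdef]; ring
    _ ≤ (C + 1 + Real.pi / Real.sin (Real.pi / p)) * (Real.exp (C / p) * |a - b|)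
          * (Kd p * Real.exp (-|x|)) :=
        mul_le_mul_of_nonneg_left (decay hp x) (by positivity)
    _ = (C + 1 + Real.pi / Real.sin (Real.pi / p)) * Real.exp (C / p) * Kd p
          * Real.exp (-|x|) * |a - b| := by ring

end CAux5

open CAux CAux2 CAux3 CAux4 CAux5 in
theorem cFun_bounded_continuous_into_V (p : ℝ) (hp : 1 < p)
    (ω : ℝ → ℝ) (hω : SO ω) :
    (∃ L, ∀ t ∈ Set.Ioi (0:ℝ), ∀ τ ∈ Set.Ioi (0:ℝ),
      Vdist p ω t τ ≤ L * |ω t - ω τ|) ∧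
    (∃ K, ∀ t ∈ Set.Ioi (0:ℝ),
      (⨆ x : ℝ, ‖cFun p ω t x‖) +
        (∫ x : ℝ, ‖deriv (cFun p ω t) x‖) ≤ K) ∧
    (∀ t ∈ Set.Ioi (0:ℝ),
      Tendsto (fun τ => Vdist p ω t τ) (nhdsWithin t (Set.Ioi 0)) (nhds 0)) := by
  obtain ⟨hcont, ⟨C0, hC0⟩, _⟩ := hω
  have hC0' : ∀ t ∈ Set.Ioi (0:ℝ), |ω t| ≤ C0 := by
    simpa [Real.norm_eq_abs] using hC0
  have hC0nn : 0 ≤ C0 := le_trans (abs_nonneg (ω 1)) (hC0' 1 (by norm_num))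
  have hm := m_pos hp
  have hKd := Kd_pos hp
  set m := Real.sin (Real.pi / p) with hmdef
  set Λ : ℝ := Real.exp (C0 / p) with hΛdef
  have hΛ : 0 < Λ := Real.exp_pos _
  set I0 : ℝ := ∫ x : ℝ, Real.exp (-|x|) with hI0def
  have hI0 : 0 ≤ I0 := integral_nonneg fun x => (Real.exp_pos _).le
  -- rewriting the derivative
  have hd : ∀ s : ℝ, deriv (cFun p ω s) = fun x => df p (ω s) x := by
    intro s
    funext x
    exact (hasDerivAt_c hp (ω s) x).deriv
  have hcf : ∀ s : ℝ, cFun p ω s = fun x => Ef p (ω s) x / Sf p x := fun s => rfl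
  set B1 : ℝ := Λ * Kd p with hB1def
  set B2 : ℝ := (C0 + 1 + Real.pi / m) * Λ * Kd p with hB2def
  have hB1 : 0 < B1 := mul_pos hΛ hKd
  have hB2 : 0 < B2 := by
    apply mul_pos (mul_pos _ hΛ) hKd
    have : 0 < Real.pi / m := div_pos Real.pi_pos hm
    linarith
  set L : ℝ := B1 + B2 * I0 with hLdef
  -- the main Lipschitz estimate
  have main : ∀ t ∈ Set.Ioi (0:ℝ), ∀ τ ∈ Set.Ioi (0:ℝ),
      Vdist p ω t τ ≤ L * |ω t - ω τ| := by
    intro t ht τ hτ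
    have ha := hC0' t ht
    have hb := hC0' τ hτ
    set Δ : ℝ := |ω t - ω τ| with hΔdef
    have hΔ0 : 0 ≤ Δ := abs_nonneg _
    have sup_le : (⨆ x : ℝ, ‖cFun p ω t x - cFun p ω τ x‖) ≤ B1 * Δ := by
      apply ciSup_le
      intro x
      have h1 := P1 hp ha hb x
      rw [hcf t, hcf τ]
      have hexp1 : Real.exp (-|x|) ≤ 1 := by
        rw [Real.exp_le_one_iff]
        simpa using abs_nonneg x
      have h2 : 0 ≤ Λ * Kd p * Δ := by positivity
      nlinarith [mul_nonneg h2 (sub_nonneg.mpr hexp1)]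
    have int_le : (∫ x : ℝ, ‖deriv (cFun p ω t) x - deriv (cFun p ω τ) x‖)
        ≤ B2 * I0 * Δ := by
      have step : (∫ x : ℝ, ‖deriv (cFun p ω t) x - deriv (cFun p ω τ) x‖)
          ≤ ∫ x : ℝ, (B2 * Δ) * Real.exp (-|x|) := by
        apply integral_mono_of_nonneg
        · exact Filter.Eventually.of_forall fun x => norm_nonneg _
        · exact integrable_decay.const_mul _
        · apply Filter.Eventually.of_forall
          intro x
          rw [hd t, hd τ]
          calc ‖df p (ω t) x - df p (ω τ) x‖
              ≤ (C0 + 1 + Real.pi / m) * Λ * Kd p * Real.exp (-|x|) * Δ := P2 hp ha hb x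
            _ = (B2 * Δ) * Real.exp (-|x|) := by rw [hB2def]; ring
      calc (∫ x : ℝ, ‖deriv (cFun p ω t) x - deriv (cFun p ω τ) x‖)
          ≤ ∫ x : ℝ, (B2 * Δ) * Real.exp (-|x|) := step
        _ = (B2 * Δ) * I0 := by rw [integral_const_mul]
        _ = B2 * I0 * Δ := by ring
    calc Vdist p ω t τ
        = (⨆ x : ℝ, ‖cFun p ω t x - cFun p ω τ x‖) +
            ∫ x : ℝ, ‖deriv (cFun p ω t) x - deriv (cFun p ω τ) x‖ := rfl
      _ ≤ B1 * Δ + B2 * I0 * Δ := add_le_add sup_le int_le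
      _ = L * Δ := by rw [hLdef]; ring
  refine ⟨⟨L, main⟩, ⟨Λ * Kd p + (C0 + Real.pi / m) * Λ * Kd p * I0, ?_⟩, ?_⟩
  · intro t ht
    have ha := hC0' t ht
    have sup_le : (⨆ x : ℝ, ‖cFun p ω t x‖) ≤ Λ * Kd p := by
      apply ciSup_le
      intro x
      rw [hcf t]
      have h1 := P0 hp ha x
      have hexp1 : Real.exp (-|x|) ≤ 1 := by
        rw [Real.exp_le_one_iff]
        simpa using abs_nonneg x
      nlinarith [mul_nonneg (mul_nonneg hΛ.le hKd.le) (sub_nonneg.mpr hexp1)]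
    have int_le : (∫ x : ℝ, ‖deriv (cFun p ω t) x‖)
        ≤ (C0 + Real.pi / m) * Λ * Kd p * I0 := by
      have step : (∫ x : ℝ, ‖deriv (cFun p ω t) x‖)
          ≤ ∫ x : ℝ, ((C0 + Real.pi / m) * Λ * Kd p) * Real.exp (-|x|) := by
        apply integral_mono_of_nonneg
        · exact Filter.Eventually.of_forall fun x => norm_nonneg _
        · exact integrable_decay.const_mul _
        · apply Filter.Eventually.of_forall
          intro x
          rw [hd t]
          calc ‖df p (ω t) x‖
              ≤ (C0 + Real.pi / m) * Λ * (Kd p * Real.exp (-|x|)) := P0' hp ha x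
            _ = ((C0 + Real.pi / m) * Λ * Kd p) * Real.exp (-|x|) := by ring
      calc (∫ x : ℝ, ‖deriv (cFun p ω t) x‖)
          ≤ ∫ x : ℝ, ((C0 + Real.pi / m) * Λ * Kd p) * Real.exp (-|x|) := step
        _ = (C0 + Real.pi / m) * Λ * Kd p * I0 := by rw [integral_const_mul]
    exact add_le_add sup_le int_le
  · intro t ht
    have h0 : ∀ τ, 0 ≤ Vdist p ω t τ := fun τ =>
      add_nonneg (Real.iSup_nonneg fun x => norm_nonneg _)
        (integral_nonneg fun x => norm_nonneg _)
    apply squeeze_zero' (Filter.Eventually.of_forall h0)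
    · filter_upwards [self_mem_nhdsWithin] with τ hτ
      exact main t ht τ hτ
    · have hcw : Tendsto ω (nhdsWithin t (Set.Ioi 0)) (nhds (ω t)) := hcont t ht
      have h2 : Tendsto (fun τ => L * |ω t - ω τ|) (nhdsWithin t (Set.Ioi 0))
          (nhds (L * |ω t - ω t|)) :=
        ((tendsto_const_nhds.sub hcw).abs.const_mul L)
      simpa using h2
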